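/- Let N be a prime and let A ⊆ ℤ/Nℤ be a set of size n. Suppose there exist b ∈ ℤ/Nℤ and an integer l < N/3 such that the number of elements of A − A lying outside the interval {b, b+1, …, b+l} is less than n/2. Then there exists a ∈ ℤ/Nℤ such that A ⊆ {a, a+1, …, a+l}. -/

import Mathlib

open Pointwise

/-- **Lemma 7** (Green–Ruzsa). Let `N` be prime and `A ⊆ ℤ/Nℤ` of size `n`. If for
some `b` and some integer `l < N/3` all but fewer than `n/2` elements of `A − A` lie
in the interval `{b, b+1, …, b+l}`, then `A ⊆ {a, a+1, …, a+l}` for some `a`. -/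
theorem subset_interval_of_difference_set {N : ℕ} (hN : N.Prime)
    (A : Finset (ZMod N)) (n : ℕ) (hn : A.card = n)
    (b : ZMod N) (l : ℕ) (hl : (l : ℝ) < N / 3)
    (h : (((A - A) \ ((Finset.range (l + 1)).image (fun i : ℕ => b + (i : ZMod N)))).card : ℝ)
        < n / 2) :
    ∃ a : ZMod N, A ⊆ (Finset.range (l + 1)).image (fun i : ℕ => a + (i : ZMod N)) := by
  haveI : Fact N.Prime := ⟨hN⟩
  have hN0 : 0 < N := hN.pos
  have h3l : 3 * l < N := by
    have : (3 * l : ℝ) < N := by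
      have hN3 : (N : ℝ) / 3 * 3 = N := by ring
      nlinarith
    exact_mod_cast this
  set I := (Finset.range (l + 1)).image (fun i : ℕ => b + (i : ZMod N)) with hI
  subst hn
  rcases A.eq_empty_or_nonempty with rfl | ⟨a₀, ha₀⟩
  · exfalso
    simp only [Finset.sub_empty, Finset.empty_sdiff, Finset.card_empty, Finset.empty_sdiff] at h
    norm_num at h
  set n := A.card with hn
  -- more than half of A maps into I under x ↦ x - c
  have hS : ∀ c ∈ A, (n : ℝ) / 2 < ((A.filter (fun x => x - c ∈ I)).card : ℝ) := by
    intro c hc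
    set S := A.filter (fun x => x - c ∈ I) with hSdef
    have hsub : S ⊆ A := Finset.filter_subset _ _
    have hcard : (A \ S).card + S.card = n := Finset.card_sdiff_add_card_eq_card hsub
    have hle : (A \ S).card ≤ ((A - A) \ I).card := by
      apply Finset.card_le_card_of_injOn (fun x => x - c)
      · intro x hx
        rw [Finset.mem_coe, Finset.mem_sdiff] at hx
        rw [Finset.mem_coe, Finset.mem_sdiff]
        obtain ⟨hxA, hxS⟩ := hx
        constructor
        · exact Finset.sub_mem_sub hxA hc
        · intro hmem
          exact hxS (Finset.mem_filter.mpr ⟨hxA, hmem⟩)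
      · intro x _ y _ hxy
        exact sub_left_injective hxy
    have : ((A \ S).card : ℝ) < n / 2 := lt_of_le_of_lt (by exact_mod_cast hle) h
    have hc2 : ((A \ S).card : ℝ) + S.card = n := by exact_mod_cast hcard
    linarith
  -- key: differences are differences of two interval elements
  have key : ∀ a ∈ A, ∀ a' ∈ A, ∃ i ≤ l, ∃ j ≤ l, a - a' = (i : ZMod N) - (j : ZMod N) := by
    intro a ha a' ha'
    set S := A.filter (fun x => x - a ∈ I) with hSdef
    set T := A.filter (fun x => x - a' ∈ I) with hTdef
    have hST : (S ∩ T).Nonempty := by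
      rw [← Finset.card_pos]
      by_contra hpos
      push_neg at hpos
      interval_cases hcard : (S ∩ T).card
      have hu : (S ∪ T).card ≤ n := Finset.card_le_card
        (Finset.union_subset (Finset.filter_subset _ _) (Finset.filter_subset _ _))
      have := Finset.card_union_add_card_inter S T
      have h1 := hS a ha
      have h2 := hS a' ha'
      have : (S.card : ℝ) + T.card = (S ∪ T).card + ((S ∩ T).card : ℕ) := by exact_mod_cast this.symm
      rw [hcard] at this
      push_cast at this
      have hu' : ((S ∪ T).card : ℝ) ≤ n := by exact_mod_cast hu
      linarith
    obtain ⟨x, hx⟩ := hST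
    rw [Finset.mem_inter, hSdef, hTdef, Finset.mem_filter, Finset.mem_filter] at hx
    obtain ⟨⟨hxA, hxa⟩, _, hxa'⟩ := hx
    rw [hI, Finset.mem_image] at hxa hxa'
    obtain ⟨i, hi, hie⟩ := hxa
    obtain ⟨j, hj, hje⟩ := hxa'
    rw [Finset.mem_range] at hi hj
    refine ⟨j, by omega, i, by omega, ?_⟩
    have : (x - a') - (x - a) = a - a' := by ring
    rw [← this, ← hie, ← hje]
    ring
  -- val dichotomy
  have val_key : ∀ a ∈ A, ∀ a' ∈ A, (a - a').val ≤ l ∨ N ≤ (a - a').val + l := by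
    intro a ha a' ha'
    obtain ⟨i, hi, j, hj, hd⟩ := key a ha a' ha'
    rcases le_or_gt j i with hji | hij
    · left
      have he : a - a' = ((i - j : ℕ) : ZMod N) := by
        rw [hd, Nat.cast_sub hji]
      rw [he, ZMod.val_cast_of_lt (by omega)]
      omega
    · right
      have he : a - a' = -(((j - i : ℕ) : ZMod N)) := by
        rw [hd, Nat.cast_sub hij.le]
        ring
      have hv : (((j - i : ℕ) : ZMod N)).val = j - i := ZMod.val_cast_of_lt (by omega)
      have hne : (((j - i : ℕ) : ZMod N)) ≠ 0 := by
        intro h0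
        rw [h0, ZMod.val_zero] at hv
        omega
      rw [he, ZMod.neg_val, if_neg hne, hv]
      omega
  -- centered representative
  set g : ZMod N → ℤ := fun a => if (a - a₀).val ≤ l then ((a - a₀).val : ℤ) else (a - a₀).val - N
    with hg
  have hgP : ∀ a ∈ A, (-(l : ℤ) ≤ g a ∧ g a ≤ l) ∧ ((g a : ZMod N) = a - a₀) := by
    intro a ha
    have hvlt : (a - a₀).val < N := ZMod.val_lt _
    have hcast : (((a - a₀).val : ℕ) : ZMod N) = a - a₀ := by
      simp [ZMod.natCast_val, ZMod.cast_id]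
    rw [hg]
    by_cases hc : (a - a₀).val ≤ l
    · simp only [if_pos hc]
      refine ⟨⟨by omega, by omega⟩, ?_⟩
      push_cast
      exact hcast
    · simp only [if_neg hc]
      have := val_key a ha a₀ ha₀
      have hkey : N ≤ (a - a₀).val + l := by omega
      refine ⟨⟨by omega, by omega⟩, ?_⟩
      push_cast
      rw [hcast, ZMod.natCast_self]
      ring
  obtain ⟨am, ham, hmin⟩ := A.exists_min_image g ⟨a₀, ha₀⟩
  refine ⟨am, fun x hx => ?_⟩
  obtain ⟨⟨hxl, hxu⟩, hxc⟩ := hgP x hx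
  obtain ⟨⟨hml, hmu⟩, hmc⟩ := hgP am ham
  set k : ℤ := g x - g am with hk
  have hk0 : 0 ≤ k := by have := hmin x hx; omega
  have hk2l : k ≤ 2 * l := by omega
  have hcastk : ((k : ℤ) : ZMod N) = x - am := by
    rw [hk]
    push_cast
    rw [hxc, hmc]
    ring
  have hmk : ((k.toNat : ℕ) : ZMod N) = ((k : ℤ) : ZMod N) := by
    have h1 : (((k.toNat : ℤ)) : ZMod N) = ((k : ℤ) : ZMod N) :=
      congrArg (fun z : ℤ => (z : ZMod N)) (Int.toNat_of_nonneg hk0)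
    exact_mod_cast h1
  have hkl : k ≤ l := by
    by_contra hkl
    push_neg at hkl
    have hvx : (x - am).val = k.toNat := by
      rw [← hcastk, ← hmk, ZMod.val_cast_of_lt (by omega)]
    have := val_key x hx am ham
    rw [hvx] at this
    omega
  rw [Finset.mem_image]
  refine ⟨k.toNat, Finset.mem_range.mpr (by omega), ?_⟩
  have : x = am + ((k : ℤ) : ZMod N) := by rw [hcastk]; ring
  rw [this, ← hmk]
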